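/- Let f be a set of monomials of degree 2 in R. The differential syzygy module Z of f (the first syzygy module of the transposed Jacobian module of f inside ⊕_i R dx_i) is generated by the vectors z_w associated to the non-split even closed walks w of length ≥ 4 in the graph G(f). -/

import Mathlib

set_option linter.unusedSectionVars false
set_option maxHeartbeats 1000000
set_option synthInstance.maxHeartbeats 400000


noncomputable section

namespace PolarAlg

open MvPolynomial

variable (k : Type*) [Field k]

/-- The exponent vector of the degree-2 monomial attached to an edge (or loop) `e`. -/
def sym2Exp {n : ℕ} (e : Sym2 (Fin n)) : Fin n → ℕ :=
  Sym2.lift ⟨fun a b i => (if a = i then 1 else 0) + (if b = i then 1 else 0),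
    fun a b => funext fun i => add_comm _ _⟩ e

/-- The monomial with exponent vector `g`. -/
def mon {n : ℕ} (g : Fin n → ℕ) : MvPolynomial (Fin n) k := ∏ i, X i ^ g i

/-- The degree-2 monomial `f i` attached to the edge `ε i` of the graph of `f`. -/
def fmon {n : ℕ} {ι : Type*} (ε : ι → Sym2 (Fin n)) (i : ι) : MvPolynomial (Fin n) k :=
  mon k (sym2Exp (ε i))

/-- `(vtx, eidx)` is an (even, of length `2r`) closed walk in the graph `G(f)` whose edges are
indexed by `ι` via `ε` : the `j`-th edge of the walk is the edge `ε (eidx j)`, joining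
`vtx j` and `vtx (j+1)`. -/
def IsWalkIn {n r : ℕ} {ι : Type*} (ε : ι → Sym2 (Fin n)) (vtx : ZMod (2 * r) → Fin n)
    (eidx : ZMod (2 * r) → ι) : Prop :=
  ∀ j, ε (eidx j) = s(vtx j, vtx (j + 1))

/-- The exponent vector of the lcm `g` of the (distinct) edge monomials of a walk. -/
def supExp {n r : ℕ} (vtx : ZMod (2 * r) → Fin n) : Fin n → ℕ := fun l =>
  (Finset.range (2 * r)).sup fun j =>
    sym2Exp (s(vtx (j : ZMod (2 * r)), vtx ((j : ZMod (2 * r)) + 1))) l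

/-- The differential syzygy `z_w` attached to an even closed walk `w = (vtx, eidx)`:
its `i`-th coordinate is the sum of the alternating terms `± g/g_j` over the positions `j`
at which the walk traverses the edge `f i`. -/
def zw {n r : ℕ} {ι : Type*} [DecidableEq ι] (ε : ι → Sym2 (Fin n))
    (vtx : ZMod (2 * r) → Fin n) (eidx : ZMod (2 * r) → ι) : ι → MvPolynomial (Fin n) k :=
  fun i => ∑ j ∈ Finset.range (2 * r),
    if eidx (j : ZMod (2 * r)) = i then
      (-1 : MvPolynomial (Fin n) k) ^ j * mon k fun l => supExp vtx l - sym2Exp (ε i) l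
    else 0

/-- The binomial `p_w = T_{w⁺} - T_{w⁻}` attached to an even closed walk. -/
def pw {r : ℕ} {ι : Type*} (eidx : ZMod (2 * r) → ι) : MvPolynomial ι k :=
  (∏ j ∈ (Finset.range (2 * r)).filter (fun j => Even j), X (eidx (j : ZMod (2 * r)))) -
    ∏ j ∈ (Finset.range (2 * r)).filter (fun j => ¬ Even j), X (eidx (j : ZMod (2 * r)))

/-- The differential syzygy module `Z` of `f`, as the set of syzygies of the transposed
Jacobian module: vectors `a` with `∑ i, a i · df i = 0`, i.e. `∑ i, a i ∂f i/∂x l = 0`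
for every `l`. -/
def Zset (n : ℕ) {ι : Type*} [Fintype ι] (ε : ι → Sym2 (Fin n)) :
    Set (ι → MvPolynomial (Fin n) k) :=
  {a | ∀ l : Fin n, ∑ i, a i * pderiv l (fmon k ε i) = 0}

/-- The generators of the polar syzygy module: the `T`-gradients of the polynomial
relations of `f`, evaluated at `f`. -/
def polarSet (n : ℕ) {ι : Type*} [Fintype ι] (ε : ι → Sym2 (Fin n)) :
    Set (ι → MvPolynomial (Fin n) k) :=
  {v | ∃ F : MvPolynomial ι k, aeval (fmon k ε) F = 0 ∧
    v = fun i => aeval (fmon k ε) (pderiv i F)}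

/-- `f` is polarizable: the polar syzygy module `P` equals the differential syzygy module
`Z` (the inclusion `P ⊆ Z` always holds, by the chain rule). -/
def Polarizable (n : ℕ) {ι : Type*} [Fintype ι] (ε : ι → Sym2 (Fin n)) : Prop :=
  Zset k n ε ⊆ ↑(Submodule.span (MvPolynomial (Fin n) k) (polarSet k n ε))

end PolarAlg

namespace Polar

/-- An even closed walk of length `2r` splits if, after a cyclic rotation, it decomposes at a
repeated vertex into two smaller even closed walks, i.e. some vertex recurs at an even
(nonzero, proper) distance along the walk. -/
def Splits {V : Type*} {r : ℕ} (vtx : ZMod (2 * r) → V) : Prop :=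
  ∃ (j : ZMod (2 * r)) (s : ℕ), 0 < s ∧ s < r ∧ vtx j = vtx (j + (2 * s : ℕ))

/-- A non-split even closed walk. -/
def NonSplit {V : Type*} {r : ℕ} (vtx : ZMod (2 * r) → V) : Prop := ¬ Splits vtx

end Polar


noncomputable section

namespace PolarAux

section Signs
variable {k : Type*} [Field k]

lemma negpow_mod2 (a : ℕ) : (-1 : k) ^ a = (-1) ^ (a % 2) := by
  conv_lhs => rw [← Nat.div_add_mod a 2]
  rw [pow_add, pow_mul]
  norm_num

lemma neg_one_pow_eq_of_even_add {a b : ℕ} (h : Even (a + b)) : (-1 : k) ^ a = (-1) ^ b := by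
  have : a % 2 = b % 2 := by
    rw [Nat.even_add, Nat.even_iff, Nat.even_iff] at h; omega
  rw [negpow_mod2, this, ← negpow_mod2]

lemma neg_one_pow_eq_neg_of_odd_add {a b : ℕ} (h : ¬ Even (a + b)) :
    (-1 : k) ^ a = -(-1) ^ b := by
  have hb : (-1 : k) ^ a = (-1) ^ (b + 1) := by
    apply neg_one_pow_eq_of_even_add
    rw [Nat.even_add] at h ⊢
    rw [Nat.even_add_one]
    tauto
  rw [hb, pow_succ, mul_comm, neg_one_mul]

lemma neg_one_pow_mul_self (a : ℕ) : (-1 : k) ^ a * (-1 : k) ^ a = 1 := by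
  rw [← mul_pow]; norm_num

end Signs



section Walks

variable {k : Type*} [Field k] [CharZero k] {V ι : Type*}
variable (ε : ι → Sym2 V) (P : ι → Prop) (φ : ι → k)

/-- A walk of length `len` from `a` to `b` with edges satisfying `P`. -/
def WalkOk (a : V) (len : ℕ) (vf : ℕ → V) (ef : ℕ → ι) (b : V) : Prop :=
  vf 0 = a ∧ vf len = b ∧ ∀ j < len, P (ef j) ∧ ε (ef j) = s(vf j, vf (j + 1))

/-- Alternating sum of `φ` along the edges. -/
def alt (len : ℕ) (ef : ℕ → ι) : k := ∑ j ∈ Finset.range len, (-1 : k) ^ j * φ (ef j)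

variable {ε P φ}

lemma walkOk_concat {a b c : V} {n1 n2 : ℕ} {v1 v2 : ℕ → V} {e1 e2 : ℕ → ι}
    (h1 : WalkOk ε P a n1 v1 e1 b) (h2 : WalkOk ε P b n2 v2 e2 c) :
    WalkOk ε P a (n1 + n2) (fun j => if j < n1 then v1 j else v2 (j - n1))
      (fun j => if j < n1 then e1 j else e2 (j - n1)) c := by
  obtain ⟨hv0, hv1, he⟩ := h1
  obtain ⟨hw0, hw1, hf⟩ := h2
  refine ⟨?_, ?_, ?_⟩
  · by_cases h : 0 < n1
    · simpa [h] using hv0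
    · have hn1 : n1 = 0 := by omega
      subst hn1
      simp only [Nat.lt_irrefl, if_neg, Nat.sub_zero, h, if_false]
      rw [hw0, ← hv1, hv0]
  · have h : ¬ (n1 + n2 < n1) := by omega
    simp only [h, if_neg, Nat.add_sub_cancel_left]
    exact hw1
  · intro j hj
    by_cases hjn : j < n1
    · have hval : (if j + 1 < n1 then v1 (j + 1) else v2 (j + 1 - n1)) = v1 (j + 1) := by
        by_cases hj1 : j + 1 < n1
        · simp [hj1]
        · have h2 : j + 1 = n1 := by omega
          simp only [hj1, if_neg, if_false]
          rw [h2, Nat.sub_self, hw0, ← hv1]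
      simp only [hjn, if_pos, hval]
      exact he j hjn
    · have hj2 : j - n1 < n2 := by omega
      refine ⟨by simpa [hjn] using (hf _ hj2).1, ?_⟩
      have hj3 : ¬ (j + 1 < n1) := by omega
      simp only [hjn, if_neg, hj3, if_false]
      rw [(hf _ hj2).2]
      have h4 : j - n1 + 1 = j + 1 - n1 := by omega
      rw [h4]

lemma alt_concat (n1 n2 : ℕ) (e1 e2 : ℕ → ι) :
    alt φ (n1 + n2) (fun j => if j < n1 then e1 j else e2 (j - n1)) =
      alt φ n1 e1 + (-1 : k) ^ n1 * alt φ n2 e2 := by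
  unfold alt
  rw [Finset.sum_range_add]
  congr 1
  · exact Finset.sum_congr rfl fun j hj => by
      simp [Finset.mem_range.mp hj]
  · rw [Finset.mul_sum]
    refine Finset.sum_congr rfl fun j hj => ?_
    have h1 : ¬ (n1 + j < n1) := by omega
    simp only [h1, if_neg, if_false, Nat.add_sub_cancel_left]
    rw [pow_add]
    ring

lemma walkOk_reverse {a b : V} {n : ℕ} {vf : ℕ → V} {ef : ℕ → ι}
    (h : WalkOk ε P a n vf ef b) :
    WalkOk ε P b n (fun j => vf (n - j)) (fun j => ef (n - 1 - j)) a := by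
  obtain ⟨hv0, hv1, he⟩ := h
  refine ⟨by simpa using hv1, by simpa using hv0, ?_⟩
  intro j hj
  dsimp only
  have hlt : n - 1 - j < n := by omega
  refine ⟨(he _ hlt).1, ?_⟩
  rw [(he _ hlt).2]
  have h1 : n - 1 - j + 1 = n - j := by omega
  have h2 : n - (j + 1) = n - 1 - j := by omega
  rw [h1, h2, Sym2.eq_swap]

lemma alt_reverse (n : ℕ) (ef : ℕ → ι) :
    alt φ n (fun j => ef (n - 1 - j)) = (-1 : k) ^ (n + 1) * alt φ n ef := by
  unfold alt
  rw [Finset.mul_sum]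
  rw [show (∑ j ∈ Finset.range n, (-1 : k) ^ (n + 1) * ((-1) ^ j * φ (ef j))) =
      ∑ j ∈ Finset.range n, (fun j => (-1 : k) ^ (n + 1) * ((-1) ^ (n - 1 - j) * φ (ef (n - 1 - j)))) j
    from (Finset.sum_range_reflect (fun j => (-1 : k) ^ (n + 1) * ((-1) ^ j * φ (ef j))) n).symm]
  refine Finset.sum_congr rfl fun j hj => ?_
  have hjn : j < n := Finset.mem_range.mp hj
  have hsign : (-1 : k) ^ j = (-1) ^ (n + 1) * (-1) ^ (n - 1 - j) := by
    rw [← pow_add]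
    apply neg_one_pow_eq_of_even_add
    have h2 : j + (n + 1 + (n - 1 - j)) = 2 * n := by omega
    rw [h2]
    exact even_two_mul _
  rw [hsign]
  ring

variable (ε P) in
/-- Reachability through walks with edges in `P`. -/
def Reaches (a b : V) : Prop := ∃ n vf ef, WalkOk ε P a n vf ef b

variable [Nonempty ι]

lemma reaches_refl (a : V) : Reaches ε P a a :=
  ⟨0, fun _ => a, fun _ => Classical.arbitrary ι, rfl, rfl, fun j hj => absurd hj (by omega)⟩

lemma reaches_symm {a b : V} (h : Reaches ε P a b) : Reaches ε P b a := by
  obtain ⟨n, vf, ef, hw⟩ := h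
  exact ⟨n, _, _, walkOk_reverse hw⟩

lemma reaches_trans {a b c : V} (h1 : Reaches ε P a b) (h2 : Reaches ε P b c) :
    Reaches ε P a c := by
  obtain ⟨n1, v1, e1, hw1⟩ := h1
  obtain ⟨n2, v2, e2, hw2⟩ := h2
  exact ⟨n1 + n2, _, _, walkOk_concat hw1 hw2⟩

lemma reaches_equivalence : Equivalence (Reaches ε P) :=
  ⟨reaches_refl, reaches_symm, reaches_trans⟩

variable (ε P) in
/-- A canonical representative of the reachability class. -/
def rep (a : V) : V := (Quot.mk (Reaches ε P) a).out

lemma rep_eq_of_reaches {a b : V} (h : Reaches ε P a b) : rep ε P a = rep ε P b := by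
  unfold rep
  rw [Quot.sound h]

lemma reaches_rep (a : V) : Reaches ε P (rep ε P a) a := by
  have h : Quot.mk (Reaches ε P) (rep ε P a) = Quot.mk (Reaches ε P) a := Quot.out_eq _
  exact (reaches_equivalence.eqvGen_iff).mp (Quot.eq.mp h)

variable (ε P) in
/-- There is an odd closed walk at `β`. -/
def ClosedOddAt (β : V) : Prop :=
  ∃ w : ℕ × (ℕ → V) × (ℕ → ι), WalkOk ε P β w.1 w.2.1 w.2.2 β ∧ ¬ Even w.1

open scoped Classical in
variable (ε P φ) in
/-- The base value of the potential on a connected component. -/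
def tval (v : V) : k :=
  if h : ClosedOddAt ε P (rep ε P v) then alt φ h.choose.1 h.choose.2.2 / 2 else 0

lemma tval_eq_of_rep_eq {a b : V} (h : rep ε P a = rep ε P b) :
    tval ε P φ a = tval ε P φ b := by
  unfold tval
  congr 1 <;> rw [h]

lemma exists_walk_rep (v : V) :
    ∃ w : ℕ × (ℕ → V) × (ℕ → ι), WalkOk ε P (rep ε P v) w.1 w.2.1 w.2.2 v := by
  obtain ⟨n, vf, ef, h⟩ := reaches_rep (ε := ε) (P := P) v
  exact ⟨(n, vf, ef), h⟩

variable (ε P φ) in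
/-- The potential function. -/
def psi (v : V) : k :=
  (-1) ^ ((exists_walk_rep (ε := ε) (P := P) v).choose.1 + 1) *
      alt φ (exists_walk_rep (ε := ε) (P := P) v).choose.1
        (exists_walk_rep (ε := ε) (P := P) v).choose.2.2 +
    (-1) ^ (exists_walk_rep (ε := ε) (P := P) v).choose.1 * tval ε P φ v

lemma psi_spec
    (hcl : ∀ (a : V) (n : ℕ) (vf : ℕ → V) (ef : ℕ → ι),
      WalkOk ε P a n vf ef a → Even n → alt φ n ef = 0)
    (v : V) {n : ℕ} {vf : ℕ → V} {ef : ℕ → ι}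
    (hw : WalkOk ε P (rep ε P v) n vf ef v) :
    psi ε P φ v = (-1) ^ (n + 1) * alt φ n ef + (-1) ^ n * tval ε P φ v := by
  set w0 := (exists_walk_rep (ε := ε) (P := P) v).choose with hw0def
  have h0 : WalkOk ε P (rep ε P v) w0.1 w0.2.1 w0.2.2 v :=
    (exists_walk_rep (ε := ε) (P := P) v).choose_spec
  have hpsidef : psi ε P φ v =
      (-1) ^ (w0.1 + 1) * alt φ w0.1 w0.2.2 + (-1) ^ w0.1 * tval ε P φ v := rfl
  have hcat := walkOk_concat h0 (walkOk_reverse hw)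
  have haltcat := alt_concat (φ := φ) w0.1 n w0.2.2 (fun j => ef (n - 1 - j))
  rw [alt_reverse] at haltcat
  have hs : (-1 : k) ^ n * (-1) ^ n = 1 := neg_one_pow_mul_self n
  by_cases hpar : Even (w0.1 + n)
  · have hz := hcl _ _ _ _ hcat hpar
    rw [haltcat] at hz
    have hsgn : (-1 : k) ^ w0.1 = (-1) ^ n := neg_one_pow_eq_of_even_add hpar
    have h0eq : alt φ w0.1 w0.2.2 = alt φ n ef := by
      rw [hsgn, pow_succ] at hz
      linear_combination hz + (alt φ n ef) * hs
    rw [hpsidef, h0eq, pow_succ, pow_succ, hsgn]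
  · have hco : ClosedOddAt ε P (rep ε P v) := ⟨(w0.1 + n, _, _), hcat, hpar⟩
    have htv : tval ε P φ v = alt φ hco.choose.1 hco.choose.2.2 / 2 := by
      unfold tval
      rw [dif_pos hco]
    set O := hco.choose with hOdef
    have hOspec : WalkOk ε P (rep ε P v) O.1 O.2.1 O.2.2 (rep ε P v) ∧ ¬ Even O.1 :=
      hco.choose_spec
    have hModd : ¬ Even O.1 := hOspec.2
    have hMcat := walkOk_concat hOspec.1 hcat
    have hMeven : Even (O.1 + (w0.1 + n)) := by
      rcases Nat.even_or_odd O.1 with h | h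
      · exact absurd h hModd
      · rcases Nat.even_or_odd (w0.1 + n) with h' | h'
        · exact absurd h' hpar
        · exact Odd.add_odd h h'
    have hz := hcl _ _ _ _ hMcat hMeven
    have haltM := alt_concat (φ := φ) O.1 (w0.1 + n) O.2.2
      (fun j => if j < w0.1 then w0.2.2 j else (fun j => ef (n - 1 - j)) (j - w0.1))
    rw [haltM, haltcat] at hz
    have hOsgn : (-1 : k) ^ O.1 = (-1 : k) := (Nat.not_even_iff_odd.mp hModd).neg_one_pow
    have hsgn : (-1 : k) ^ w0.1 = -(-1) ^ n := neg_one_pow_eq_neg_of_odd_add hpar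
    have hOeq : alt φ O.1 O.2.2 = alt φ w0.1 w0.2.2 + alt φ n ef := by
      rw [hOsgn, hsgn, pow_succ] at hz
      linear_combination hz + (alt φ n ef) * hs
    rw [hpsidef, htv, hOeq, pow_succ, pow_succ, hsgn]
    ring

lemma psi_add_psi
    (hcl : ∀ (a : V) (n : ℕ) (vf : ℕ → V) (ef : ℕ → ι),
      WalkOk ε P a n vf ef a → Even n → alt φ n ef = 0)
    {i : ι} (hP : P i) {a b : V} (hab : ε i = s(a, b)) :
    psi ε P φ a + psi ε P φ b = φ i := by
  have hedge : WalkOk ε P a 1 (fun j => if j = 0 then a else b) (fun _ => i) b := by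
    refine ⟨by simp, by simp, ?_⟩
    intro j hj
    have hj0 : j = 0 := by omega
    subst hj0
    simpa using ⟨hP, hab⟩
  have hrep : rep ε P a = rep ε P b := rep_eq_of_reaches ⟨1, _, _, hedge⟩
  obtain ⟨n, vf, ef, hwa⟩ := reaches_rep (ε := ε) (P := P) a
  have hwb : WalkOk ε P (rep ε P b) (n + 1)
      (fun j => if j < n then vf j else (fun j => if j = 0 then a else b) (j - n))
      (fun j => if j < n then ef j else (fun _ => i) (j - n)) b := by
    rw [← hrep]
    exact walkOk_concat hwa hedge
  have haltb := alt_concat (φ := φ) n 1 ef (fun _ => i)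
  have h1 : alt φ 1 (fun _ : ℕ => i) = φ i := by simp [alt]
  rw [h1] at haltb
  have ha := psi_spec hcl a hwa
  have hb := psi_spec hcl b hwb
  rw [haltb] at hb
  have ht : tval ε P φ a = tval ε P φ b := tval_eq_of_rep_eq hrep
  have hs : (-1 : k) ^ n * (-1) ^ n = 1 := neg_one_pow_mul_self n
  rw [ha, hb, ← ht, pow_succ, pow_succ, pow_succ]
  linear_combination (φ i) * hs

end Walks


section ZModAux

variable {k : Type*} [Field k]

lemma sum_range_zmod {N : ℕ} [NeZero N] {M : Type*} [AddCommMonoid M] (F : ZMod N → M) :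
    ∑ j ∈ Finset.range N, F ((j : ℕ) : ZMod N) = ∑ u : ZMod N, F u := by
  refine Finset.sum_nbij' (fun j => ((j : ℕ) : ZMod N)) (fun u => u.val) ?_ ?_ ?_ ?_ ?_
  · intro a _; exact Finset.mem_univ _
  · intro u _; exact Finset.mem_range.mpr (ZMod.val_lt u)
  · intro a ha; exact ZMod.val_cast_of_lt (Finset.mem_range.mp ha)
  · intro u _; exact ZMod.natCast_rightInverse u
  · intro a _; rfl

lemma val_add_parity {N : ℕ} [NeZero N] (hN : 2 ∣ N) (x y : ZMod N) :
    (-1 : k) ^ (x + y).val = (-1) ^ (x.val + y.val) := by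
  rw [ZMod.val_add]
  rw [negpow_mod2, negpow_mod2 (x.val + y.val)]
  congr 1
  exact Nat.ModEq.of_dvd hN (Nat.mod_modEq _ N)

/-- Rotation lemma: rotating an even closed summation by `c` multiplies the alternating
sum by `(-1)^c.val`. -/
lemma rot_sum {N : ℕ} [NeZero N] (hN : 2 ∣ N) (c : ZMod N) (F : ZMod N → k) :
    ∑ p ∈ Finset.range N, (-1 : k) ^ p * F (c + ((p : ℕ) : ZMod N)) =
      (-1) ^ c.val * ∑ p ∈ Finset.range N, (-1 : k) ^ p * F ((p : ℕ) : ZMod N) := by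
  have key : ∀ G : ZMod N → k, ∑ p ∈ Finset.range N, G ((p : ℕ) : ZMod N) = ∑ u : ZMod N, G u :=
    fun G => sum_range_zmod G
  have step1 : ∑ p ∈ Finset.range N, (-1 : k) ^ p * F (c + ((p : ℕ) : ZMod N)) =
      (-1) ^ c.val * ∑ p ∈ Finset.range N,
        ((-1 : k) ^ (c + ((p : ℕ) : ZMod N)).val * F (c + ((p : ℕ) : ZMod N))) := by
    rw [Finset.mul_sum]
    refine Finset.sum_congr rfl fun p hp => ?_
    have hval : ((p : ℕ) : ZMod N).val = p := ZMod.val_cast_of_lt (Finset.mem_range.mp hp)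
    rw [val_add_parity hN, hval, pow_add, ← mul_assoc, ← mul_assoc, neg_one_pow_mul_self]
    ring
  rw [step1]
  congr 1
  have h1 : ∑ p ∈ Finset.range N, (-1 : k) ^ (c + ((p : ℕ) : ZMod N)).val * F (c + ((p : ℕ) : ZMod N)) =
      ∑ u : ZMod N, (-1 : k) ^ (c + u).val * F (c + u) :=
    key (fun u => (-1 : k) ^ (c + u).val * F (c + u))
  have h2 : ∑ u : ZMod N, (-1 : k) ^ (c + u).val * F (c + u) =
      ∑ u : ZMod N, (-1 : k) ^ u.val * F u :=
    Fintype.sum_equiv (Equiv.addLeft c) _ _ (fun u => rfl)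
  rw [h1, h2, ← key (fun u => (-1 : k) ^ u.val * F u)]
  refine Finset.sum_congr rfl fun p hp => ?_
  rw [ZMod.val_cast_of_lt (Finset.mem_range.mp hp)]

end ZModAux

end PolarAux

namespace PolarAux

open PolarAlg MvPolynomial

section Alg

variable {k : Type*} [Field k] [CharZero k] {n m : ℕ}

/-- The exponent finsupp of the edge monomial. -/
def E (ε : Fin m → Sym2 (Fin n)) (i : Fin m) : Fin n →₀ ℕ :=
  Finsupp.equivFunOnFinite.symm (sym2Exp (ε i))

lemma E_apply (ε : Fin m → Sym2 (Fin n)) (i : Fin m) (l : Fin n) :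
    E ε i l = sym2Exp (ε i) l := rfl

lemma sym2Exp_mk (a b l : Fin n) :
    sym2Exp s(a, b) l = (if a = l then 1 else 0) + (if b = l then 1 else 0) := rfl

lemma mon_eq_monomial (g : Fin n → ℕ) :
    mon k g = monomial (Finsupp.equivFunOnFinite.symm g) (1 : k) := by
  rw [monomial_eq, C_1, one_mul, Finsupp.prod_fintype _ _ (fun i => pow_zero _)]
  rfl

lemma fmon_eq_monomial (ε : Fin m → Sym2 (Fin n)) (i : Fin m) :
    fmon k ε i = monomial (E ε i) (1 : k) := mon_eq_monomial _


variable (k) in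
/-- The generating set of the theorem. -/
def genSet (ε : Fin m → Sym2 (Fin n)) : Set (Fin m → MvPolynomial (Fin n) k) :=
  {a | ∃ r : ℕ, 2 ≤ r ∧ ∃ (vtx : ZMod (2 * r) → Fin n) (eidx : ZMod (2 * r) → Fin m),
      IsWalkIn ε vtx eidx ∧ Polar.NonSplit vtx ∧ a = zw k ε vtx eidx}

variable (k) in
def Wspan (ε : Fin m → Sym2 (Fin n)) :
    Submodule (MvPolynomial (Fin n) k) (Fin m → MvPolynomial (Fin n) k) :=
  Submodule.span _ (genSet k ε)

lemma negpow_C (j : ℕ) : ((-1 : MvPolynomial (Fin n) k)) ^ j = C ((-1 : k) ^ j) := by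
  rw [map_pow, map_neg, map_one]

lemma symm_sub (f g : Fin n → ℕ) :
    Finsupp.equivFunOnFinite.symm (fun l => f l - g l) =
      Finsupp.equivFunOnFinite.symm f - Finsupp.equivFunOnFinite.symm g := by
  ext x
  rw [Finsupp.tsub_apply]
  rfl

lemma supExp_le {r : ℕ} [NeZero (2 * r)] {ε : Fin m → Sym2 (Fin n)}
    {vtx : ZMod (2 * r) → Fin n} {eidx : ZMod (2 * r) → Fin m}
    (hwalk : IsWalkIn ε vtx eidx) (u : ZMod (2 * r)) :
    E ε (eidx u) ≤ Finsupp.equivFunOnFinite.symm (supExp vtx) := by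
  intro x
  have hval : ((u.val : ℕ) : ZMod (2 * r)) = u := ZMod.natCast_rightInverse u
  have hmem : u.val ∈ Finset.range (2 * r) := Finset.mem_range.mpr (ZMod.val_lt u)
  have hle := Finset.le_sup (f := fun j =>
    sym2Exp (s(vtx ((j : ℕ) : ZMod (2 * r)), vtx (((j : ℕ) : ZMod (2 * r)) + 1))) x) hmem
  rw [hval] at hle
  calc E ε (eidx u) x = sym2Exp (ε (eidx u)) x := rfl
    _ = sym2Exp (s(vtx u, vtx (u + 1))) x := by rw [hwalk u]
    _ ≤ _ := hle

lemma alt_vertex_sum {r : ℕ} (hr : 2 ≤ r) (vtx : ZMod (2 * r) → Fin n) (l : Fin n) :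
    ∑ j ∈ Finset.range (2 * r),
      (-1 : k) ^ j * ((sym2Exp (s(vtx ((j : ℕ) : ZMod (2 * r)), vtx (((j : ℕ) : ZMod (2 * r)) + 1))) l : ℕ) : k) = 0 := by
  haveI : NeZero (2 * r) := ⟨by omega⟩
  haveI : Fact (1 < 2 * r) := ⟨by omega⟩
  have hsplit : ∀ j : ℕ,
      ((sym2Exp (s(vtx ((j : ℕ) : ZMod (2 * r)), vtx (((j : ℕ) : ZMod (2 * r)) + 1))) l : ℕ) : k) =
        (if vtx ((j : ℕ) : ZMod (2 * r)) = l then (1 : k) else 0) +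
          (if vtx (((j : ℕ) : ZMod (2 * r)) + 1) = l then (1 : k) else 0) := by
    intro j
    rw [sym2Exp_mk]
    push_cast
    congr 1 <;> (split <;> simp)
  have hF : ∀ j : ℕ, (-1 : k) ^ j *
      ((sym2Exp (s(vtx ((j : ℕ) : ZMod (2 * r)), vtx (((j : ℕ) : ZMod (2 * r)) + 1))) l : ℕ) : k) =
      (-1 : k) ^ j * (if vtx ((j : ℕ) : ZMod (2 * r)) = l then (1 : k) else 0) +
        (-1 : k) ^ j * (if vtx (((j : ℕ) : ZMod (2 * r)) + 1) = l then (1 : k) else 0) := by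
    intro j
    rw [hsplit j, mul_add]
  rw [Finset.sum_congr rfl fun j _ => hF j, Finset.sum_add_distrib]
  have hrot := rot_sum (k := k) (N := 2 * r) ⟨r, rfl⟩ 1
    (fun u => if vtx u = l then (1 : k) else 0)
  have hcomm : ∀ j : ℕ, (1 : ZMod (2 * r)) + ((j : ℕ) : ZMod (2 * r)) = ((j : ℕ) : ZMod (2 * r)) + 1 :=
    fun j => add_comm _ _
  have h2 : ∑ j ∈ Finset.range (2 * r),
      (-1 : k) ^ j * (if vtx (((j : ℕ) : ZMod (2 * r)) + 1) = l then (1 : k) else 0) =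
      (-1 : k) ^ ((1 : ZMod (2 * r)).val) * ∑ j ∈ Finset.range (2 * r),
        (-1 : k) ^ j * (if vtx ((j : ℕ) : ZMod (2 * r)) = l then (1 : k) else 0) := by
    rw [← hrot]
    exact Finset.sum_congr rfl fun j _ => by rw [hcomm j]
  rw [h2, ZMod.val_one]
  ring

lemma zw_mem_Zset (ε : Fin m → Sym2 (Fin n)) {r : ℕ} (hr : 2 ≤ r)
    (vtx : ZMod (2 * r) → Fin n) (eidx : ZMod (2 * r) → Fin m)
    (hwalk : IsWalkIn ε vtx eidx) :
    zw k ε vtx eidx ∈ Zset k n ε := by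
  intro l
  haveI : NeZero (2 * r) := ⟨by omega⟩
  set G : Fin n →₀ ℕ := Finsupp.equivFunOnFinite.symm (supExp vtx) with hGdef
  have step1 : ∀ i : Fin m, zw k ε vtx eidx i * pderiv l (fmon k ε i) =
      ∑ j ∈ Finset.range (2 * r), (if eidx ((j : ℕ) : ZMod (2 * r)) = i then
        ((-1 : MvPolynomial (Fin n) k) ^ j *
          mon k (fun l' => supExp vtx l' - sym2Exp (ε i) l') * pderiv l (fmon k ε i)) else 0) := by
    intro i
    rw [zw, Finset.sum_mul]
    exact Finset.sum_congr rfl fun j _ => by rw [ite_mul, zero_mul]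
  rw [Finset.sum_congr rfl fun i _ => step1 i, Finset.sum_comm]
  have step2 : ∀ j ∈ Finset.range (2 * r), ∑ i : Fin m,
      (if eidx ((j : ℕ) : ZMod (2 * r)) = i then
        ((-1 : MvPolynomial (Fin n) k) ^ j *
          mon k (fun l' => supExp vtx l' - sym2Exp (ε i) l') * pderiv l (fmon k ε i)) else 0) =
      monomial (G - Finsupp.single l 1)
        ((-1 : k) ^ j * ((sym2Exp (ε (eidx ((j : ℕ) : ZMod (2 * r)))) l : ℕ) : k)) := by
    intro j hj
    rw [Finset.sum_ite_eq, if_pos (Finset.mem_univ _)]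
    set u : ZMod (2 * r) := ((j : ℕ) : ZMod (2 * r)) with hu
    have hEG : E ε (eidx u) ≤ G := supExp_le hwalk u
    have hmon : mon k (fun l' => supExp vtx l' - sym2Exp (ε (eidx u)) l') =
        monomial (G - E ε (eidx u)) (1 : k) := by
      rw [mon_eq_monomial, symm_sub]
      rfl
    rw [hmon, fmon_eq_monomial, pderiv_monomial, one_mul, negpow_C, C_mul_monomial,
      monomial_mul]
    show _ = monomial (G - Finsupp.single l 1) ((-1 : k) ^ j * ((E ε (eidx u) l : ℕ) : k))
    by_cases hc : E ε (eidx u) l = 0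
    · rw [hc]
      push_cast
      rw [mul_zero, mul_zero, map_zero, map_zero]
    · have hexp : (G - E ε (eidx u)) + (E ε (eidx u) - Finsupp.single l 1) =
          G - Finsupp.single l 1 := by
        ext x
        have hx := hEG x
        simp only [Finsupp.add_apply, Finsupp.tsub_apply, Finsupp.single_apply]
        split
        · next h => subst h; omega
        · omega
      rw [hexp]
      congr 1
      ring
  rw [Finset.sum_congr rfl step2, ← map_sum]
  have hfin : ∑ j ∈ Finset.range (2 * r),
      (-1 : k) ^ j * ((sym2Exp (ε (eidx ((j : ℕ) : ZMod (2 * r)))) l : ℕ) : k) = 0 := by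
    rw [Finset.sum_congr rfl fun j _ => by
      rw [hwalk ((j : ℕ) : ZMod (2 * r))]]
    exact alt_vertex_sum hr vtx l
  rw [hfin, map_zero]


variable (k) in
/-- The sign-count vector of an even closed walk. -/
def sig {r : ℕ} (eidx : ZMod (2 * r) → Fin m) : Fin m → k := fun i =>
  ∑ j ∈ Finset.range (2 * r), (-1 : k) ^ j * (if eidx ((j : ℕ) : ZMod (2 * r)) = i then 1 else 0)

lemma sig_mem (ε : Fin m → Sym2 (Fin n)) (hinj : Function.Injective ε) (D : Fin n →₀ ℕ) :
    ∀ r : ℕ, ∀ (vtx : ZMod (2 * r) → Fin n) (eidx : ZMod (2 * r) → Fin m),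
      IsWalkIn ε vtx eidx → (∀ u, E ε (eidx u) ≤ D) →
      (fun i => monomial (D - E ε i) (sig k eidx i)) ∈ Wspan k ε := by
  intro r
  induction r using Nat.strong_induction_on with
  | _ r IH =>
  intro vtx eidx hwalk hT
  rcases Nat.lt_or_ge r 2 with h2 | h2
  · interval_cases r
    · have hz : (fun i => monomial (D - E ε i) (sig k eidx i)) =
          (0 : Fin m → MvPolynomial (Fin n) k) := by
        funext i
        simp [sig]
      rw [hz]
      exact Submodule.zero_mem _
    · have hc0 : ((0 : ℕ) : ZMod (2 * 1)) = 0 := Nat.cast_zero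
      have hc1 : ((1 : ℕ) : ZMod (2 * 1)) = 1 := Nat.cast_one
      have h11 : (1 + 1 : ZMod (2 * 1)) = 0 := by decide
      have h01 : (0 + 1 : ZMod (2 * 1)) = 1 := by decide
      have he : eidx 1 = eidx 0 := by
        apply hinj
        rw [hwalk 1, hwalk 0, h11, h01, Sym2.eq_swap]
      have hz : (fun i => monomial (D - E ε i) (sig k eidx i)) =
          (0 : Fin m → MvPolynomial (Fin n) k) := by
        funext i
        have : sig k eidx i = 0 := by
          rw [sig]
          rw [Finset.sum_range_succ, Finset.sum_range_one, hc0, hc1, he]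
          ring
        rw [this, map_zero]
        rfl
      rw [hz]
      exact Submodule.zero_mem _
  · haveI : NeZero (2 * r) := ⟨by omega⟩
    haveI : Fact (1 < 2 * r) := ⟨by omega⟩
    by_cases hns : Polar.NonSplit vtx
    · -- generator case
      set G : Fin n →₀ ℕ := Finsupp.equivFunOnFinite.symm (supExp vtx) with hGdef
      have hGD : G ≤ D := by
        intro x
        show supExp vtx x ≤ D x
        refine Finset.sup_le fun j hj => ?_
        have := (hT ((j : ℕ) : ZMod (2 * r))) x
        rw [E_apply, hwalk ((j : ℕ) : ZMod (2 * r))] at this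
        exact this
      have hz : (fun i => monomial (D - E ε i) (sig k eidx i)) =
          (monomial (D - G) (1 : k)) • zw k ε vtx eidx := by
        funext i
        have hlhs : monomial (D - E ε i) (sig k eidx i) =
            ∑ j ∈ Finset.range (2 * r), (if eidx ((j : ℕ) : ZMod (2 * r)) = i then
              monomial (D - E ε i) ((-1 : k) ^ j) else 0) := by
          rw [sig, map_sum]
          refine Finset.sum_congr rfl fun j _ => ?_
          split
          · rw [mul_one]
          · rw [mul_zero, map_zero]
        have hrhs : ((monomial (D - G) (1 : k)) • zw k ε vtx eidx) i =
            ∑ j ∈ Finset.range (2 * r), (if eidx ((j : ℕ) : ZMod (2 * r)) = i then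
              monomial ((D - G) + (G - E ε i)) ((-1 : k) ^ j) else 0) := by
          show monomial (D - G) (1 : k) * zw k ε vtx eidx i = _
          rw [zw, Finset.mul_sum]
          refine Finset.sum_congr rfl fun j _ => ?_
          split
          · next h =>
            have hmon : mon k (fun l' => supExp vtx l' - sym2Exp (ε i) l') =
                monomial (G - E ε i) (1 : k) := by
              rw [mon_eq_monomial, symm_sub]
              rfl
            rw [hmon, negpow_C, C_mul_monomial, mul_one, monomial_mul, one_mul]
          · rw [mul_zero]
        rw [hlhs, hrhs]
        refine Finset.sum_congr rfl fun j _ => ?_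
        split
        · next h =>
          have hEG : E ε i ≤ G := h ▸ supExp_le hwalk ((j : ℕ) : ZMod (2 * r))
          have hexp : (D - G) + (G - E ε i) = D - E ε i := by
            ext x
            have h1 := hEG x
            have h2 := hGD x
            simp only [Finsupp.add_apply, Finsupp.tsub_apply]
            have h2' : (Finsupp.equivFunOnFinite.symm (supExp vtx) : Fin n →₀ ℕ) x ≤ D x := h2
            omega
          rw [hexp]
        · rfl
      rw [hz]
      exact Submodule.smul_mem _ _ (Submodule.subset_span
        ⟨r, h2, vtx, eidx, hwalk, hns, rfl⟩)
    · -- split case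
      rw [Polar.NonSplit, not_not] at hns
      obtain ⟨j₀, q, hq0, hqr, hvv⟩ := hns
      set r2 : ℕ := r - q with hr2def
      haveI : NeZero (2 * q) := ⟨by omega⟩
      haveI : NeZero (2 * r2) := ⟨by omega⟩
      haveI : Fact (1 < 2 * q) := ⟨by omega⟩
      haveI : Fact (1 < 2 * r2) := ⟨by omega⟩
      set vtx1 : ZMod (2 * q) → Fin n :=
        fun t => vtx (j₀ + ((t.val : ℕ) : ZMod (2 * r))) with hvtx1
      set eidx1 : ZMod (2 * q) → Fin m :=
        fun t => eidx (j₀ + ((t.val : ℕ) : ZMod (2 * r))) with heidx1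
      set vtx2 : ZMod (2 * r2) → Fin n :=
        fun t => vtx (j₀ + ((2 * q : ℕ) : ZMod (2 * r)) + ((t.val : ℕ) : ZMod (2 * r))) with hvtx2
      set eidx2 : ZMod (2 * r2) → Fin m :=
        fun t => eidx (j₀ + ((2 * q : ℕ) : ZMod (2 * r)) + ((t.val : ℕ) : ZMod (2 * r))) with heidx2
      have hw1 : IsWalkIn ε vtx1 eidx1 := by
        intro t
        rw [hvtx1, heidx1]
        dsimp only
        rw [hwalk (j₀ + ((t.val : ℕ) : ZMod (2 * r)))]
        rcases Nat.lt_or_ge (t.val + 1) (2 * q) with h | h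
        · have hval : (t + 1).val = t.val + 1 := by
            rw [ZMod.val_add, ZMod.val_one, Nat.mod_eq_of_lt h]
          have hidx : vtx (j₀ + ((t.val + 1 : ℕ) : ZMod (2 * r))) =
              vtx (j₀ + ((t.val : ℕ) : ZMod (2 * r)) + 1) := by
            congr 1
            push_cast
            ring
          rw [hval, hidx]
        · have hteq : t.val + 1 = 2 * q := by
            have := ZMod.val_lt t
            omega
          have hval : (t + 1).val = 0 := by
            rw [ZMod.val_add, ZMod.val_one, hteq, Nat.mod_self]
          have hidx : vtx (j₀ + ((0 : ℕ) : ZMod (2 * r))) =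
              vtx (j₀ + ((t.val : ℕ) : ZMod (2 * r)) + 1) := by
            rw [Nat.cast_zero, add_zero, hvv]
            have hc : ((2 * q : ℕ) : ZMod (2 * r)) = ((t.val + 1 : ℕ) : ZMod (2 * r)) :=
              congrArg (fun x : ℕ => ((x : ℕ) : ZMod (2 * r))) hteq.symm
            rw [hc]
            congr 1
            push_cast
            ring
          rw [hval, hidx]
      have hw2 : IsWalkIn ε vtx2 eidx2 := by
        intro t
        rw [hvtx2, heidx2]
        dsimp only
        rw [hwalk (j₀ + ((2 * q : ℕ) : ZMod (2 * r)) + ((t.val : ℕ) : ZMod (2 * r)))]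
        rcases Nat.lt_or_ge (t.val + 1) (2 * r2) with h | h
        · have hval : (t + 1).val = t.val + 1 := by
            rw [ZMod.val_add, ZMod.val_one, Nat.mod_eq_of_lt h]
          have hidx : vtx (j₀ + ((2 * q : ℕ) : ZMod (2 * r)) + ((t.val + 1 : ℕ) : ZMod (2 * r))) =
              vtx (j₀ + ((2 * q : ℕ) : ZMod (2 * r)) + ((t.val : ℕ) : ZMod (2 * r)) + 1) := by
            congr 1
            push_cast
            ring
          rw [hval, hidx]
        · have hteq : t.val + 1 = 2 * r2 := by
            have := ZMod.val_lt t
            omega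
          have hval : (t + 1).val = 0 := by
            rw [ZMod.val_add, ZMod.val_one, hteq, Nat.mod_self]
          have hidx : vtx (j₀ + ((2 * q : ℕ) : ZMod (2 * r)) + ((0 : ℕ) : ZMod (2 * r))) =
              vtx (j₀ + ((2 * q : ℕ) : ZMod (2 * r)) + ((t.val : ℕ) : ZMod (2 * r)) + 1) := by
            have hidx2 : j₀ + ((2 * q : ℕ) : ZMod (2 * r)) + ((t.val : ℕ) : ZMod (2 * r)) + 1 = j₀ := by
              have hcomb : ((2 * q : ℕ) : ZMod (2 * r)) + ((t.val : ℕ) : ZMod (2 * r)) + 1 =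
                  ((2 * q + t.val + 1 : ℕ) : ZMod (2 * r)) := by
                push_cast
                ring
              have h2 : 2 * q + t.val + 1 = 2 * r := by omega
              calc j₀ + ((2 * q : ℕ) : ZMod (2 * r)) + ((t.val : ℕ) : ZMod (2 * r)) + 1 =
                  j₀ + (((2 * q : ℕ) : ZMod (2 * r)) + ((t.val : ℕ) : ZMod (2 * r)) + 1) := by ring
                _ = j₀ + ((2 * q + t.val + 1 : ℕ) : ZMod (2 * r)) := by rw [hcomb]
                _ = j₀ := by rw [h2, ZMod.natCast_self, add_zero]
            rw [Nat.cast_zero, add_zero, hidx2, ← hvv]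
          rw [hval, hidx]
      have hT1 : ∀ u, E ε (eidx1 u) ≤ D := fun u => hT _
      have hT2 : ∀ u, E ε (eidx2 u) ≤ D := fun u => hT _
      have IH1 := IH q (by omega) vtx1 eidx1 hw1 hT1
      have IH2 := IH r2 (by omega) vtx2 eidx2 hw2 hT2
      have hchunk : ∀ f : ℕ → k, ∑ p ∈ Finset.range (2 * r), f p =
          (∑ p ∈ Finset.range (2 * q), f p) + ∑ p ∈ Finset.range (2 * r2), f (2 * q + p) := by
        intro f
        have h1 : ∑ p ∈ Finset.range (2 * r), f p =
            ∑ p ∈ Finset.Ico 0 (2 * q), f p + ∑ p ∈ Finset.Ico (2 * q) (2 * r), f p := by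
          rw [Finset.range_eq_Ico,
            ← Finset.sum_Ico_consecutive _ (Nat.zero_le (2 * q)) (by omega : 2 * q ≤ 2 * r)]
        rw [h1, ← Finset.range_eq_Ico, Finset.sum_Ico_eq_sum_range,
          show 2 * r - 2 * q = 2 * r2 from by omega]
      have hdecomp : ∀ i, sig k eidx i =
          (-1 : k) ^ (j₀.val) * (sig k eidx1 i + sig k eidx2 i) := by
        intro i
        set F : ZMod (2 * r) → k := fun u => if eidx u = i then (1 : k) else 0 with hFdef
        have hrot := rot_sum (k := k) (N := 2 * r) ⟨r, rfl⟩ j₀ F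
        have hsig : sig k eidx i = ∑ p ∈ Finset.range (2 * r), (-1 : k) ^ p * F ((p : ℕ) : ZMod (2 * r)) := rfl
        have hmain : (-1 : k) ^ (j₀.val) *
            (∑ p ∈ Finset.range (2 * r), (-1 : k) ^ p * F (j₀ + ((p : ℕ) : ZMod (2 * r)))) =
            ∑ p ∈ Finset.range (2 * r), (-1 : k) ^ p * F ((p : ℕ) : ZMod (2 * r)) := by
          rw [hrot, ← mul_assoc, neg_one_pow_mul_self, one_mul]
        have hsplit2 : ∑ p ∈ Finset.range (2 * r), (-1 : k) ^ p * F (j₀ + ((p : ℕ) : ZMod (2 * r))) =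
            sig k eidx1 i + sig k eidx2 i := by
          rw [hchunk (fun p => (-1 : k) ^ p * F (j₀ + ((p : ℕ) : ZMod (2 * r))))]
          congr 1
          · rw [sig]
            refine Finset.sum_congr rfl fun p hp => ?_
            rw [heidx1, hFdef]
            dsimp only
            simp only [ZMod.val_cast_of_lt (Finset.mem_range.mp hp)]
          · rw [sig]
            refine Finset.sum_congr rfl fun p hp => ?_
            rw [heidx2, hFdef]
            dsimp only
            simp only [ZMod.val_cast_of_lt (Finset.mem_range.mp hp)]
            rw [pow_add, (even_two_mul q).neg_one_pow, one_mul]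
            congr 2
            push_cast
            ring
        rw [hsig, ← hmain, hsplit2]
      have hz : (fun i => monomial (D - E ε i) (sig k eidx i)) =
          (C ((-1 : k) ^ (j₀.val)) : MvPolynomial (Fin n) k) •
            ((fun i => monomial (D - E ε i) (sig k eidx1 i)) +
              (fun i => monomial (D - E ε i) (sig k eidx2 i))) := by
        funext i
        show monomial (D - E ε i) (sig k eidx i) =
          (C ((-1 : k) ^ (j₀.val)) : MvPolynomial (Fin n) k) * (monomial (D - E ε i) (sig k eidx1 i) +
            monomial (D - E ε i) (sig k eidx2 i))
        rw [hdecomp i, mul_add, mul_add, C_mul_monomial, C_mul_monomial, ← map_add]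
      rw [hz]
      exact Submodule.smul_mem _ _ (Submodule.add_mem _ IH1 IH2)


lemma lemC (ε : Fin m → Sym2 (Fin n)) (D : Fin n →₀ ℕ) (φi : Fin m → k)
    (H : ∀ (r : ℕ) (vtx : ZMod (2 * r) → Fin n) (eidx : ZMod (2 * r) → Fin m),
      IsWalkIn ε vtx eidx → (∀ u, E ε (eidx u) ≤ D) →
      ∑ j ∈ Finset.range (2 * r), (-1 : k) ^ j * φi (eidx ((j : ℕ) : ZMod (2 * r))) = 0)
    (c : Fin m → k) (hc : ∀ i, c i ≠ 0 → E ε i ≤ D)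
    (K : ∀ l : Fin n, ∑ i, ((sym2Exp (ε i) l : ℕ) : k) * c i = 0) :
    ∑ i, c i * φi i = 0 := by
  rcases Nat.eq_zero_or_pos m with hm | hm
  · subst hm
    simp
  haveI : Nonempty (Fin m) := ⟨⟨0, hm⟩⟩
  set P : Fin m → Prop := fun i => E ε i ≤ D with hPdef
  have hcl : ∀ (a : Fin n) (N : ℕ) (vf : ℕ → Fin n) (ef : ℕ → Fin m),
      WalkOk ε P a N vf ef a → Even N → alt φi N ef = 0 := by
    intro a N vf ef hw hev
    obtain ⟨r, hr⟩ := hev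
    subst hr
    rcases Nat.eq_zero_or_pos r with hr0 | hr0
    · subst hr0
      simp [alt]
    haveI : NeZero (2 * r) := ⟨by omega⟩
    haveI : Fact (1 < 2 * r) := ⟨by omega⟩
    obtain ⟨hv0, hvN, he⟩ := hw
    set vtx : ZMod (2 * r) → Fin n := fun u => vf u.val with hvtxdef
    set eidx : ZMod (2 * r) → Fin m := fun u => ef u.val with heidxdef
    have hwalk : IsWalkIn ε vtx eidx := by
      intro u
      have hu : u.val < r + r := by have := ZMod.val_lt u; omega
      rw [heidxdef, hvtxdef]
      dsimp only
      rw [(he u.val hu).2]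
      congr 1
      rcases Nat.lt_or_ge (u.val + 1) (2 * r) with h | h
      · have hval : (u + 1).val = u.val + 1 := by
          rw [ZMod.val_add, ZMod.val_one, Nat.mod_eq_of_lt h]
        rw [hval]
      · have hueq : u.val + 1 = 2 * r := by
          have := ZMod.val_lt u
          omega
        have hval : (u + 1).val = 0 := by
          rw [ZMod.val_add, ZMod.val_one, hueq, Nat.mod_self]
        have hNv : vf (2 * r) = a := by
          rw [two_mul]
          exact hvN
        rw [hval, hueq, hv0, hNv]
    have hT : ∀ u, E ε (eidx u) ≤ D := by
      intro u
      have hu : u.val < r + r := by have := ZMod.val_lt u; omega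
      exact (he u.val hu).1
    have hzero := H r vtx eidx hwalk hT
    have heq : ∑ j ∈ Finset.range (2 * r), (-1 : k) ^ j * φi (ef j) =
        ∑ j ∈ Finset.range (2 * r), (-1 : k) ^ j * φi (eidx ((j : ℕ) : ZMod (2 * r))) := by
      refine Finset.sum_congr rfl fun j hj => ?_
      rw [heidxdef]
      dsimp only
      rw [ZMod.val_cast_of_lt (Finset.mem_range.mp hj)]
    rw [alt, show r + r = 2 * r from (two_mul r).symm, heq]
    exact hzero
  set ψ : Fin n → k := psi ε P φi with hψdef
  have hkey : ∀ i, c i ≠ 0 → φi i = ∑ l, ((sym2Exp (ε i) l : ℕ) : k) * ψ l := by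
    intro i hci
    obtain ⟨a, b, hab⟩ : ∃ a b, ε i = s(a, b) := by
      generalize ε i = e
      induction e using Sym2.ind with
      | _ x y => exact ⟨x, y, rfl⟩
    have hsum : ψ a + ψ b = φi i := psi_add_psi hcl (hc i hci) hab
    rw [← hsum]
    have hterm : ∀ l, ((sym2Exp (ε i) l : ℕ) : k) * ψ l =
        (if a = l then ψ l else 0) + (if b = l then ψ l else 0) := by
      intro l
      rw [hab, sym2Exp_mk]
      push_cast
      split <;> split <;> ring
    rw [Finset.sum_congr rfl fun l _ => hterm l, Finset.sum_add_distrib]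
    congr 1
    · rw [Finset.sum_ite_eq, if_pos (Finset.mem_univ a)]
    · rw [Finset.sum_ite_eq, if_pos (Finset.mem_univ b)]
  have hstep : ∑ i, c i * φi i = ∑ i, ∑ l, ((sym2Exp (ε i) l : ℕ) : k) * c i * ψ l := by
    refine Finset.sum_congr rfl fun i _ => ?_
    by_cases hci : c i = 0
    · rw [hci, zero_mul]
      symm
      refine Finset.sum_eq_zero fun l _ => ?_
      rw [mul_zero, zero_mul]
    · rw [hkey i hci, Finset.mul_sum]
      refine Finset.sum_congr rfl fun l _ => ?_
      ring
  rw [hstep, Finset.sum_comm]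
  refine Finset.sum_eq_zero fun l _ => ?_
  have : ∑ i, ((sym2Exp (ε i) l : ℕ) : k) * c i * ψ l =
      (∑ i, ((sym2Exp (ε i) l : ℕ) : k) * c i) * ψ l := by
    rw [Finset.sum_mul]
  rw [this, K l, zero_mul]


lemma perD (ε : Fin m → Sym2 (Fin n)) (hinj : Function.Injective ε) (D : Fin n →₀ ℕ)
    (c : Fin m → k) (hc : ∀ i, c i ≠ 0 → E ε i ≤ D)
    (K : ∀ l : Fin n, ∑ i, ((sym2Exp (ε i) l : ℕ) : k) * c i = 0) :
    (fun i => monomial (D - E ε i) (c i)) ∈ Wspan k ε := by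
  by_contra hne
  have h0 : ((Wspan k ε).mkQ (fun i => monomial (D - E ε i) (c i))) ≠ 0 := by
    rw [Submodule.mkQ_apply, Ne, Submodule.Quotient.mk_eq_zero]
    exact hne
  obtain ⟨g, hg⟩ : ∃ g : Module.Dual k ((Fin m → MvPolynomial (Fin n) k) ⧸ Wspan k ε),
      g ((Wspan k ε).mkQ (fun i => monomial (D - E ε i) (c i))) ≠ 0 := by
    by_contra hcon
    push_neg at hcon
    exact h0 ((Module.forall_dual_apply_eq_zero_iff k _).mp hcon)
  set φlin : (Fin m → MvPolynomial (Fin n) k) →ₗ[k] k :=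
    g.comp (((Wspan k ε).mkQ).restrictScalars k) with hφdef
  set φi : Fin m → k := fun i => φlin (Pi.single i (monomial (D - E ε i) (1 : k)) : Fin m → MvPolynomial (Fin n) k) with hφidef
  have hker : ∀ v ∈ Wspan k ε, φlin v = 0 := by
    intro v hv
    have hmkq : (Wspan k ε).mkQ v = 0 := by
      rw [Submodule.mkQ_apply, Submodule.Quotient.mk_eq_zero]
      exact hv
    show g (((Wspan k ε).mkQ) v) = 0
    rw [hmkq, map_zero]
  have hΦ : ∀ c' : Fin m → k, (fun i => monomial (D - E ε i) (c' i)) =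
      ∑ i, c' i • (Pi.single i (monomial (D - E ε i) (1 : k)) : Fin m → MvPolynomial (Fin n) k) := by
    intro c'
    funext i'
    rw [Finset.sum_apply]
    rw [Finset.sum_eq_single i']
    · rw [Pi.smul_apply, Pi.single_eq_same, smul_monomial, smul_eq_mul, mul_one]
    · intro b _ hb
      rw [Pi.smul_apply, Pi.single_eq_of_ne (Ne.symm hb), smul_zero]
    · intro h
      exact absurd (Finset.mem_univ i') h
  have hφc : ∀ c' : Fin m → k,
      φlin (fun i => monomial (D - E ε i) (c' i)) = ∑ i, c' i * φi i := by
    intro c'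
    rw [hΦ, map_sum]
    refine Finset.sum_congr rfl fun i _ => ?_
    rw [map_smul, smul_eq_mul]
  have H : ∀ (r : ℕ) (vtx : ZMod (2 * r) → Fin n) (eidx : ZMod (2 * r) → Fin m),
      IsWalkIn ε vtx eidx → (∀ u, E ε (eidx u) ≤ D) →
      ∑ j ∈ Finset.range (2 * r), (-1 : k) ^ j * φi (eidx ((j : ℕ) : ZMod (2 * r))) = 0 := by
    intro r vtx eidx hwalk hT
    have hmem := sig_mem (k := k) ε hinj D r vtx eidx hwalk hT
    have h1 : φlin (fun i => monomial (D - E ε i) (sig k eidx i)) = 0 := hker _ hmem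
    rw [hφc] at h1
    have h2 : ∑ i, sig k eidx i * φi i =
        ∑ j ∈ Finset.range (2 * r), (-1 : k) ^ j * φi (eidx ((j : ℕ) : ZMod (2 * r))) := by
      have hsw : ∀ i : Fin m, sig k eidx i * φi i = ∑ j ∈ Finset.range (2 * r),
          (if eidx ((j : ℕ) : ZMod (2 * r)) = i then (-1 : k) ^ j * φi i else 0) := by
        intro i
        rw [sig, Finset.sum_mul]
        refine Finset.sum_congr rfl fun j _ => ?_
        split <;> ring
      rw [Finset.sum_congr rfl fun i _ => hsw i, Finset.sum_comm]
      refine Finset.sum_congr rfl fun j _ => ?_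
      rw [Finset.sum_ite_eq, if_pos (Finset.mem_univ _)]
    rw [← h2]
    exact h1
  have hzero := lemC ε D φi H c hc K
  have hval := hφc c
  rw [hzero] at hval
  exact hg hval


lemma K_of_mem (ε : Fin m → Sym2 (Fin n)) {a : Fin m → MvPolynomial (Fin n) k}
    (ha : a ∈ Zset k n ε) (D : Fin n →₀ ℕ) (l : Fin n) :
    ∑ i, ((sym2Exp (ε i) l : ℕ) : k) *
      (if E ε i ≤ D then coeff (D - E ε i) (a i) else 0) = 0 := by
  by_cases hD : D l = 0
  · refine Finset.sum_eq_zero fun i _ => ?_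
    by_cases hED : E ε i ≤ D
    · have h1 : sym2Exp (ε i) l = 0 := by
        have h2 := hED l
        have h3 : E ε i l = sym2Exp (ε i) l := rfl
        omega
      rw [h1, Nat.cast_zero, zero_mul]
    · rw [if_neg hED, mul_zero]
  · have hco := congrArg (coeff (D - Finsupp.single l 1)) (ha l)
    rw [coeff_sum, coeff_zero] at hco
    have hterm : ∀ i : Fin m, coeff (D - Finsupp.single l 1) (a i * pderiv l (fmon k ε i)) =
        ((sym2Exp (ε i) l : ℕ) : k) *
          (if E ε i ≤ D then coeff (D - E ε i) (a i) else 0) := by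
      intro i
      rw [fmon_eq_monomial, pderiv_monomial, one_mul, coeff_mul_monomial']
      by_cases hEl : E ε i l = 0
      · rw [show sym2Exp (ε i) l = 0 from hEl, Nat.cast_zero, zero_mul]
        split
        · rw [hEl, Nat.cast_zero, mul_zero]
        · rfl
      · have hiff : (E ε i - Finsupp.single l 1 ≤ D - Finsupp.single l 1) ↔ E ε i ≤ D := by
          constructor
          · intro h x
            have hx := h x
            simp only [Finsupp.tsub_apply, Finsupp.single_apply] at hx
            rcases eq_or_ne l x with he | he
            · subst he
              simp at hx
              omega
            · simp only [if_neg he] at hx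
              omega
          · intro h x
            simp only [Finsupp.tsub_apply, Finsupp.single_apply]
            have hx := h x
            split <;> simp <;> omega
        by_cases hED : E ε i ≤ D
        · rw [if_pos (hiff.mpr hED), if_pos hED]
          have hsub : D - Finsupp.single l 1 - (E ε i - Finsupp.single l 1) = D - E ε i := by
            ext x
            simp only [Finsupp.tsub_apply, Finsupp.single_apply]
            have hx := hED x
            rcases eq_or_ne l x with he | he
            · subst he
              simp only [if_pos rfl, if_true]
              have h4 : E ε i l ≠ 0 := hEl
              omega
            · simp only [if_neg he]
              omega
          rw [hsub]
          have hEs : ((E ε i l : ℕ) : k) = ((sym2Exp (ε i) l : ℕ) : k) := rfl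
          rw [hEs]
          ring
        · rw [if_neg (fun h => hED (hiff.mp h)), if_neg hED, mul_zero]
    exact ((Finset.sum_congr rfl fun i _ => hterm i).symm).trans hco

variable (k) in
def Zsub (ε : Fin m → Sym2 (Fin n)) :
    Submodule (MvPolynomial (Fin n) k) (Fin m → MvPolynomial (Fin n) k) where
  carrier := Zset k n ε
  add_mem' := by
    intro a b ha hb l
    simp only [Pi.add_apply, add_mul]
    rw [Finset.sum_add_distrib, ha l, hb l, add_zero]
  zero_mem' := by
    intro l
    simp
  smul_mem' := by
    intro r a ha l
    simp only [Pi.smul_apply, smul_eq_mul, mul_assoc]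
    rw [← Finset.mul_sum, ha l, mul_zero]

theorem zset_eq_span (ε : Fin m → Sym2 (Fin n)) (hinj : Function.Injective ε) :
    Zset k n ε = ↑(Wspan k ε) := by
  apply Set.Subset.antisymm
  · intro a ha
    set 𝒟 : Finset (Fin n →₀ ℕ) :=
      Finset.univ.biUnion (fun i : Fin m => (a i).support.image (· + E ε i)) with h𝒟
    have hdec : a = ∑ D ∈ 𝒟, (fun i => monomial (D - E ε i)
        (if E ε i ≤ D then coeff (D - E ε i) (a i) else 0)) := by
      funext i
      rw [Finset.sum_apply]
      have hsub : (a i).support.image (· + E ε i) ⊆ 𝒟 := by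
        rw [h𝒟]
        exact Finset.subset_biUnion_of_mem
          (fun i : Fin m => (a i).support.image (· + E ε i)) (Finset.mem_univ i)
      rw [← Finset.sum_subset hsub ?_]
      · rw [Finset.sum_image ?_]
        · conv_lhs => rw [← support_sum_monomial_coeff (a i)]
          refine Finset.sum_congr rfl fun u hu => ?_
          rw [if_pos le_add_self, add_tsub_cancel_right]
        · intro x _ y _ hxy
          exact add_left_injective _ hxy
      · intro D hD hnot
        by_cases hED : E ε i ≤ D
        · rw [if_pos hED]
          by_cases hcz : coeff (D - E ε i) (a i) = 0
          · rw [hcz, map_zero]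
          · exfalso
            apply hnot
            refine Finset.mem_image.mpr ⟨D - E ε i, ?_, ?_⟩
            · exact MvPolynomial.mem_support_iff.mpr hcz
            · exact tsub_add_cancel_of_le hED
        · rw [if_neg hED, map_zero]
    rw [hdec]
    refine Submodule.sum_mem _ fun D _ => perD ε hinj D _ (fun i h => ?_) (K_of_mem ε ha D)
    by_contra hED
    rw [if_neg hED] at h
    exact h rfl
  · have hle : Wspan k ε ≤ Zsub k ε := by
      rw [Wspan, Submodule.span_le]
      rintro v ⟨r, hr, vtx, eidx, hwalk, hns, rfl⟩
      exact zw_mem_Zset ε hr vtx eidx hwalk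
    intro a ha
    exact hle ha

end Alg

end PolarAux

open PolarAlg MvPolynomial in
/-- Theorem 4.4: the differential syzygy module `Z` of a set `f` of distinct degree-2
monomials is generated by the vectors `z_w`, over all non-split even closed walks `w` of
length ≥ 4 of the graph `G(f)`. -/
theorem differential_syzygies_generated_by_walks (k : Type*) [Field k] [CharZero k]
    {n m : ℕ} (ε : Fin m → Sym2 (Fin n)) (hinj : Function.Injective ε) :
    Zset k n ε =
      ↑(Submodule.span (MvPolynomial (Fin n) k)
        {a : Fin m → MvPolynomial (Fin n) k |
          ∃ r : ℕ, 2 ≤ r ∧ ∃ (vtx : ZMod (2 * r) → Fin n) (eidx : ZMod (2 * r) → Fin m),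
            IsWalkIn ε vtx eidx ∧ Polar.NonSplit vtx ∧ a = zw k ε vtx eidx}) :=
  PolarAux.zset_eq_span ε hinj
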